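/- Let r₀ > 0, δ ≥ 0, D > 0, and let h : [0,∞) → ℝ be a backward profile function with area radius r₀ and Hawking mass bound δ. Let h_E(σ) = max(r₀ − σ, 0) be the Euclidean backward profile, whose derivative is h_E'(σ) = −1 for σ < r₀ and h_E'(σ) = 0 for σ > r₀. Then ∫₀^D ( h(σ)² − h_E(σ)² )² · 4π·h_E(σ)² dσ + ∫₀^D ( 2·h(σ)·h'(σ) − 2·h_E(σ)·h_E'(σ) )² · 4π·h_E(σ)² dσ ≤ (1 + r₀²)·( 16·√π · r₀² · δ^{1/3} · D^{1/6} )². -/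

import Mathlib

open Real intervalIntegral

/-- A *backward profile function* with area radius `r₀` and Hawking mass
bound `δ`: a differentiable function `h : [0,∞) → ℝ` with `h(0) = r₀`,
`−1 ≤ h'(σ) ≤ 0` and `h(σ)·(1 − h'(σ)²) ≤ 2δ` for all `σ ≥ 0`. -/
def IsBackwardProfile (r₀ δ : ℝ) (h : ℝ → ℝ) : Prop :=
  h 0 = r₀
  ∧ (∀ σ ≥ (0:ℝ), DifferentiableAt ℝ h σ)
  ∧ (∀ σ ≥ (0:ℝ), -1 ≤ deriv h σ ∧ deriv h σ ≤ 0)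
  ∧ (∀ σ ≥ (0:ℝ), h σ * (1 - (deriv h σ) ^ 2) ≤ 2 * δ)

/-- The Euclidean backward profile `h_E(σ) = max(r₀ − σ, 0)`. -/
noncomputable def euclideanBackwardProfile (r₀ : ℝ) : ℝ → ℝ :=
  fun σ => max (r₀ - σ) 0

/-- The derivative of the Euclidean backward profile: `−1` for `σ < r₀`
and `0` for `σ ≥ r₀` (its value at the single point `σ = r₀` is immaterial). -/
noncomputable def euclideanBackwardProfileDeriv (r₀ : ℝ) : ℝ → ℝ :=
  fun σ => if σ < r₀ then -1 else 0

set_option maxHeartbeats 1000000 in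
/-- Auxiliary integral bound: if `g` vanishes beyond `r` and is bounded by `C`
on `[0, min D r]`, then its interval integral over `[0, D]` is at most
`C * min D r`.  No integrability hypothesis is needed: if `g` is not interval
integrable, the integral is `0` by convention. -/
lemma intBound_aux (g : ℝ → ℝ) {D r C : ℝ} (hD : 0 ≤ D) (hr : 0 ≤ r) (hC : 0 ≤ C)
    (hzero : ∀ σ, r ≤ σ → g σ = 0)
    (hbound : ∀ σ ∈ Set.Icc (0:ℝ) (min D r), g σ ≤ C) :
    (∫ σ in (0:ℝ)..D, g σ) ≤ C * min D r := by
  by_cases hint : IntervalIntegrable g MeasureTheory.volume 0 D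
  · rcases le_total D r with hDr | hrD
    · rw [min_eq_left hDr]
      calc (∫ σ in (0:ℝ)..D, g σ) ≤ ∫ _σ in (0:ℝ)..D, C := by
            apply intervalIntegral.integral_mono_on hD hint (intervalIntegrable_const)
            intro x hx
            exact hbound x ⟨hx.1, by rw [min_eq_left hDr]; exact hx.2⟩
        _ = C * D := by simp [smul_eq_mul, mul_comm]
    · rw [min_eq_right hrD]
      have hmem : r ∈ Set.uIcc (0:ℝ) D := Set.mem_uIcc.mpr (Or.inl ⟨hr, hrD⟩)
      have hsub1 : IntervalIntegrable g MeasureTheory.volume 0 r :=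
        hint.mono_set (Set.uIcc_subset_uIcc Set.left_mem_uIcc hmem)
      have hsub2 : IntervalIntegrable g MeasureTheory.volume r D :=
        hint.mono_set (Set.uIcc_subset_uIcc hmem Set.right_mem_uIcc)
      have hsplit : (∫ σ in (0:ℝ)..r, g σ) + (∫ σ in r..D, g σ)
          = ∫ σ in (0:ℝ)..D, g σ :=
        intervalIntegral.integral_add_adjacent_intervals hsub1 hsub2
      have hzero2 : (∫ σ in r..D, g σ) = 0 := by
        have : (∫ σ in r..D, g σ) = ∫ _σ in r..D, (0:ℝ) := by
          apply intervalIntegral.integral_congr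
          intro x hx
          rw [Set.uIcc_of_le hrD] at hx
          exact hzero x hx.1
        rw [this, intervalIntegral.integral_zero]
      have hmain : (∫ σ in (0:ℝ)..r, g σ) ≤ C * r := by
        calc (∫ σ in (0:ℝ)..r, g σ) ≤ ∫ _σ in (0:ℝ)..r, C := by
              apply intervalIntegral.integral_mono_on hr hsub1 (intervalIntegrable_const)
              intro x hx
              exact hbound x ⟨hx.1, le_trans hx.2 (le_min hrD le_rfl)⟩
          _ = C * r := by simp [smul_eq_mul, mul_comm]
      linarith
  · rw [intervalIntegral.integral_undef hint]
    exact mul_nonneg hC (le_min hD hr)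

set_option maxHeartbeats 2000000 in
/-- **Sobolev stability without diffeomorphisms.**
If `h` is a backward profile function with area radius `r₀ > 0` and Hawking
mass bound `δ ≥ 0`, then for any `D > 0` the squared weighted `H¹[0,D]` norm
of `h² − h_E²` (with `h_E(σ) = max(r₀ − σ, 0)` the Euclidean backward profile)
is at most `(1 + r₀²)·(16√π·r₀²·δ^(1/3)·D^(1/6))²`. -/
theorem sobolev_stability_no_diffeo
    (r₀ δ D : ℝ) (hr : 0 < r₀) (hδ : 0 ≤ δ) (hD : 0 < D)
    (h : ℝ → ℝ) (hprof : IsBackwardProfile r₀ δ h) :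
    (∫ σ in (0:ℝ)..D,
        ((h σ) ^ 2 - (euclideanBackwardProfile r₀ σ) ^ 2) ^ 2 *
          (4 * π * (euclideanBackwardProfile r₀ σ) ^ 2))
      + (∫ σ in (0:ℝ)..D,
          (2 * h σ * deriv h σ
              - 2 * euclideanBackwardProfile r₀ σ * euclideanBackwardProfileDeriv r₀ σ) ^ 2 *
            (4 * π * (euclideanBackwardProfile r₀ σ) ^ 2))
    ≤ (1 + r₀ ^ 2) *
        (16 * Real.sqrt π * r₀ ^ 2 * δ ^ ((1:ℝ)/3) * D ^ ((1:ℝ)/6)) ^ 2 := by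
  obtain ⟨h0, hdiff, hd, hc⟩ := hprof
  have hcont : ContinuousOn h (Set.Ici 0) := fun σ hσ =>
    (hdiff σ hσ).continuousAt.continuousWithinAt
  -- h ≤ r₀ on [0,∞)
  have hub : ∀ σ : ℝ, 0 ≤ σ → h σ ≤ r₀ := by
    have hanti : AntitoneOn h (Set.Ici 0) := by
      apply antitoneOn_of_deriv_nonpos (convex_Ici 0) hcont
      · intro x hx
        rw [interior_Ici] at hx
        exact (hdiff x (le_of_lt hx)).differentiableWithinAt
      · intro x hx
        rw [interior_Ici] at hx
        exact (hd x (le_of_lt hx)).2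
    intro σ hσ
    have := hanti Set.self_mem_Ici (Set.mem_Ici.mpr hσ) hσ
    rwa [h0] at this
  -- r₀ - σ ≤ h σ on [0,∞)
  have hlb : ∀ σ : ℝ, 0 ≤ σ → r₀ - σ ≤ h σ := by
    have hmono : MonotoneOn (fun σ => h σ + σ) (Set.Ici 0) := by
      apply monotoneOn_of_deriv_nonneg (convex_Ici 0)
      · exact hcont.add continuousOn_id
      · intro x hx
        rw [interior_Ici] at hx
        exact ((hdiff x hx.le).add differentiableAt_fun_id).differentiableWithinAt
      · intro x hx
        rw [interior_Ici] at hx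
        have hder : deriv (fun σ => h σ + σ) x = deriv h x + 1 := by
          rw [deriv_fun_add (hdiff x hx.le) differentiableAt_fun_id]
          simp
        rw [hder]
        linarith [(hd x hx.le).1]
    intro σ hσ
    have := hmono Set.self_mem_Ici (Set.mem_Ici.mpr hσ) hσ
    simp only [h0] at this
    linarith
  -- the derivative inequality 2 h h' + 2(r₀ - σ) ≤ 4δ
  have hE4 : ∀ σ : ℝ, 0 ≤ σ → σ ≤ r₀ →
      2 * h σ * deriv h σ + 2 * (r₀ - σ) ≤ 4 * δ := by
    intro σ h0σ hσr
    have ha : r₀ - σ ≤ h σ := hlb σ h0σ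
    have ha0 : 0 ≤ h σ := le_trans (by linarith) ha
    have hd' := hd σ h0σ
    have hc' := hc σ h0σ
    nlinarith [mul_nonneg (mul_nonneg ha0 (by linarith [hd'.1] : (0:ℝ) ≤ deriv h σ + 1))
        (by linarith [hd'.2] : (0:ℝ) ≤ -(deriv h σ))]
  -- integrated bound h² - (r₀-σ)² ≤ 4δσ on [0, r₀]
  have hfb : ∀ σ : ℝ, 0 ≤ σ → σ ≤ r₀ →
      h σ ^ 2 - (r₀ - σ) ^ 2 ≤ 4 * δ * σ := by
    have hmono : MonotoneOn (fun σ => 4 * δ * σ - (h σ ^ 2 - (r₀ - σ) ^ 2))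
        (Set.Icc 0 r₀) := by
      apply monotoneOn_of_deriv_nonneg (convex_Icc 0 r₀)
      · apply ContinuousOn.sub
        · exact (continuous_const.mul continuous_id).continuousOn
        · apply ContinuousOn.sub
          · exact ((hcont.mono Set.Icc_subset_Ici_self).pow 2)
          · exact ((continuous_const.sub continuous_id).pow 2).continuousOn
      · intro x hx
        rw [interior_Icc] at hx
        have Hh : HasDerivAt h (deriv h x) x := (hdiff x hx.1.le).hasDerivAt
        have H1 : HasDerivAt (fun σ => h σ ^ 2) (2 * h x * deriv h x) x := by
          have := Hh.fun_pow 2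
          norm_num at this
          convert this using 1 <;> ring
        have H2 : HasDerivAt (fun σ : ℝ => (r₀ - σ) ^ 2) (2 * (r₀ - x) * (-1)) x := by
          have hb : HasDerivAt (fun σ : ℝ => r₀ - σ) (-1) x := by
            simpa using (hasDerivAt_id x).const_sub r₀
          have := hb.fun_pow 2
          norm_num at this
          exact this.congr_deriv (by ring)
        have H3 : HasDerivAt (fun σ : ℝ => 4 * δ * σ) (4 * δ) x := by
          simpa using (hasDerivAt_id x).const_mul (4 * δ)
        exact (H3.sub (H1.sub H2)).differentiableAt.differentiableWithinAt
      · intro x hx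
        rw [interior_Icc] at hx
        have Hh : HasDerivAt h (deriv h x) x := (hdiff x hx.1.le).hasDerivAt
        have H1 : HasDerivAt (fun σ => h σ ^ 2) (2 * h x * deriv h x) x := by
          have := Hh.fun_pow 2
          norm_num at this
          convert this using 1 <;> ring
        have H2 : HasDerivAt (fun σ : ℝ => (r₀ - σ) ^ 2) (2 * (r₀ - x) * (-1)) x := by
          have hb : HasDerivAt (fun σ : ℝ => r₀ - σ) (-1) x := by
            simpa using (hasDerivAt_id x).const_sub r₀
          have := hb.fun_pow 2
          norm_num at this
          exact this.congr_deriv (by ring)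
        have H3 : HasDerivAt (fun σ : ℝ => 4 * δ * σ) (4 * δ) x := by
          simpa using (hasDerivAt_id x).const_mul (4 * δ)
        rw [(H3.fun_sub (H1.fun_sub H2)).deriv]
        have := hE4 x hx.1.le hx.2.le
        linarith
    intro σ h0σ hσr
    have := hmono (Set.mem_Icc.mpr ⟨le_refl 0, hr.le⟩) (Set.mem_Icc.mpr ⟨h0σ, hσr⟩) h0σ
    simp only at this
    rw [h0] at this
    nlinarith [this]
  set t : ℝ := min (4 * δ) r₀ with htdef
  have ht0 : 0 ≤ t := le_min (by linarith) hr.le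
  have hM0 : 0 ≤ min D r₀ := le_min hD.le hr.le
  -- h² - (r₀-σ)² ≤ r₀ t on [0, r₀]
  have hft : ∀ σ : ℝ, 0 ≤ σ → σ ≤ r₀ →
      h σ ^ 2 - (r₀ - σ) ^ 2 ≤ r₀ * t := by
    intro σ h0σ hσr
    have hub' := hub σ h0σ
    have hlb' := hlb σ h0σ
    rcases min_cases (4 * δ) r₀ with ⟨he, _⟩ | ⟨he, _⟩ <;> rw [htdef, he]
    · nlinarith [hfb σ h0σ hσr, mul_nonneg hδ (by linarith : (0:ℝ) ≤ r₀ - σ)]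
    · nlinarith [mul_nonneg (by linarith : (0:ℝ) ≤ r₀ - h σ) (by linarith : (0:ℝ) ≤ r₀ + h σ),
        sq_nonneg (r₀ - σ)]
  -- pointwise bound for the first integrand
  have hB1 : ∀ σ ∈ Set.Icc (0:ℝ) (min D r₀),
      ((h σ) ^ 2 - (euclideanBackwardProfile r₀ σ) ^ 2) ^ 2 *
          (4 * π * (euclideanBackwardProfile r₀ σ) ^ 2)
        ≤ 4 * π * r₀ ^ 4 * t ^ 2 := by
    rintro σ ⟨h0σ, hσm⟩
    have hσr : σ ≤ r₀ := le_trans hσm (min_le_right _ _)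
    have hEeq : euclideanBackwardProfile r₀ σ = r₀ - σ := by
      unfold euclideanBackwardProfile
      exact max_eq_left (by linarith)
    rw [hEeq]
    have hb : r₀ - σ ≤ h σ := hlb σ h0σ
    have hb0 : (0:ℝ) ≤ r₀ - σ := by linarith
    have hub' : h σ ≤ r₀ := hub σ h0σ
    have hf0 : 0 ≤ h σ ^ 2 - (r₀ - σ) ^ 2 := by nlinarith
    have hft' := hft σ h0σ hσr
    have h1 : (h σ ^ 2 - (r₀ - σ) ^ 2) ^ 2 ≤ (r₀ * t) ^ 2 := by nlinarith
    have h2 : (r₀ - σ) ^ 2 ≤ r₀ ^ 2 := by nlinarith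
    nlinarith [mul_le_mul h1 h2 (sq_nonneg _) (sq_nonneg (r₀ * t)), pi_pos,
      mul_le_mul_of_nonneg_left (mul_le_mul h1 h2 (sq_nonneg _) (sq_nonneg (r₀ * t)))
        (by positivity : (0:ℝ) ≤ 4 * π)]
  -- pointwise bound for the second integrand
  have hB2 : ∀ σ ∈ Set.Icc (0:ℝ) (min D r₀),
      (2 * h σ * deriv h σ
          - 2 * euclideanBackwardProfile r₀ σ * euclideanBackwardProfileDeriv r₀ σ) ^ 2 *
        (4 * π * (euclideanBackwardProfile r₀ σ) ^ 2)
        ≤ 16 * π * r₀ ^ 2 * t ^ 2 := by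
    rintro σ ⟨h0σ, hσm⟩
    have hσr : σ ≤ r₀ := le_trans hσm (min_le_right _ _)
    rcases eq_or_lt_of_le hσr with heq | hlt
    · have hE0 : euclideanBackwardProfile r₀ σ = 0 := by
        unfold euclideanBackwardProfile
        rw [heq]
        simp
      rw [hE0]
      have : (2 * h σ * deriv h σ - 2 * 0 * euclideanBackwardProfileDeriv r₀ σ) ^ 2 *
          (4 * π * 0 ^ 2) = 0 := by ring
      rw [this]
      positivity
    · have hEeq : euclideanBackwardProfile r₀ σ = r₀ - σ := by
        unfold euclideanBackwardProfile
        exact max_eq_left (by linarith)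
      have hEDeq : euclideanBackwardProfileDeriv r₀ σ = -1 := if_pos hlt
      rw [hEeq, hEDeq]
      have hb : r₀ - σ ≤ h σ := hlb σ h0σ
      have hb0 : (0:ℝ) ≤ r₀ - σ := by linarith
      have ha0 : 0 ≤ h σ := le_trans hb0 hb
      have hub' : h σ ≤ r₀ := hub σ h0σ
      have hd' := hd σ h0σ
      have hE4' := hE4 σ h0σ hσr
      have hft' := hft σ h0σ hσr
      -- upper bound for E·(r₀-σ)
      have hup : (2 * h σ * deriv h σ + 2 * (r₀ - σ)) * (r₀ - σ) ≤ 2 * r₀ * t := by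
        rcases min_cases (4 * δ) r₀ with ⟨he, _⟩ | ⟨he, hle⟩ <;> rw [htdef, he]
        · nlinarith [mul_le_mul_of_nonneg_right hE4' hb0,
            mul_nonneg hδ h0σ, mul_nonneg hδ hb0]
        · nlinarith [mul_nonneg (mul_nonneg ha0 (by linarith [hd'.2] : (0:ℝ) ≤ -(deriv h σ))) hb0,
            mul_nonneg (by linarith : (0:ℝ) ≤ σ) hb0]
      -- lower bound for E·(r₀-σ)
      have hlo : -(2 * r₀ * t) ≤ (2 * h σ * deriv h σ + 2 * (r₀ - σ)) * (r₀ - σ) := by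
        nlinarith [mul_nonneg (mul_nonneg (by linarith [hd'.1] : (0:ℝ) ≤ deriv h σ + 1) ha0) hb0,
          mul_nonneg ha0 (by linarith : (0:ℝ) ≤ h σ - (r₀ - σ))]
      have hEb2 : ((2 * h σ * deriv h σ + 2 * (r₀ - σ)) * (r₀ - σ)) ^ 2 ≤ (2 * r₀ * t) ^ 2 :=
        sq_le_sq' hlo hup
      calc (2 * h σ * deriv h σ - 2 * (r₀ - σ) * (-1)) ^ 2 * (4 * π * (r₀ - σ) ^ 2)
          = 4 * π * (((2 * h σ * deriv h σ + 2 * (r₀ - σ)) * (r₀ - σ)) ^ 2) := by ring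
        _ ≤ 4 * π * ((2 * r₀ * t) ^ 2) := by
            exact mul_le_mul_of_nonneg_left hEb2 (by positivity)
        _ = 16 * π * r₀ ^ 2 * t ^ 2 := by ring
  -- vanishing beyond r₀
  have hz1 : ∀ σ : ℝ, r₀ ≤ σ →
      ((h σ) ^ 2 - (euclideanBackwardProfile r₀ σ) ^ 2) ^ 2 *
        (4 * π * (euclideanBackwardProfile r₀ σ) ^ 2) = 0 := by
    intro σ hσ
    have hE0 : euclideanBackwardProfile r₀ σ = 0 := by
      unfold euclideanBackwardProfile
      exact max_eq_right (by linarith)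
    rw [hE0]; ring
  have hz2 : ∀ σ : ℝ, r₀ ≤ σ →
      (2 * h σ * deriv h σ
          - 2 * euclideanBackwardProfile r₀ σ * euclideanBackwardProfileDeriv r₀ σ) ^ 2 *
        (4 * π * (euclideanBackwardProfile r₀ σ) ^ 2) = 0 := by
    intro σ hσ
    have hE0 : euclideanBackwardProfile r₀ σ = 0 := by
      unfold euclideanBackwardProfile
      exact max_eq_right (by linarith)
    rw [hE0]; ring
  have hI1 := intBound_aux
      (fun σ => ((h σ) ^ 2 - (euclideanBackwardProfile r₀ σ) ^ 2) ^ 2 *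
        (4 * π * (euclideanBackwardProfile r₀ σ) ^ 2))
      hD.le hr.le (by positivity : (0:ℝ) ≤ 4 * π * r₀ ^ 4 * t ^ 2) hz1 hB1
  have hI2 := intBound_aux
      (fun σ => (2 * h σ * deriv h σ
          - 2 * euclideanBackwardProfile r₀ σ * euclideanBackwardProfileDeriv r₀ σ) ^ 2 *
        (4 * π * (euclideanBackwardProfile r₀ σ) ^ 2))
      hD.le hr.le (by positivity : (0:ℝ) ≤ 16 * π * r₀ ^ 2 * t ^ 2) hz2 hB2
  -- rpow interpolation: t² · min D r₀ ≤ 4 δ^(2/3) r₀² D^(1/3)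
  have hrpow : t ^ 2 * min D r₀ ≤ 4 * δ ^ ((2:ℝ)/3) * r₀ ^ 2 * D ^ ((1:ℝ)/3) := by
    have e1 : t ^ 2 = t ^ ((2:ℝ)/3) * t ^ ((4:ℝ)/3) := by
      rw [← Real.rpow_natCast t 2, show ((2:ℕ):ℝ) = 2/3 + 4/3 by norm_num,
        Real.rpow_add' ht0 (by norm_num)]
    have e2 : min D r₀ = (min D r₀) ^ ((2:ℝ)/3) * (min D r₀) ^ ((1:ℝ)/3) := by
      rw [← Real.rpow_add' hM0 (by norm_num)]
      norm_num
    have b1 : t ^ ((2:ℝ)/3) ≤ (4 * δ) ^ ((2:ℝ)/3) :=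
      Real.rpow_le_rpow ht0 (min_le_left _ _) (by norm_num)
    have b1' : (4 * δ) ^ ((2:ℝ)/3) ≤ 4 * δ ^ ((2:ℝ)/3) := by
      rw [Real.mul_rpow (by norm_num) hδ]
      have h4 : (4:ℝ) ^ ((2:ℝ)/3) ≤ 4 := by
        calc (4:ℝ) ^ ((2:ℝ)/3) ≤ (4:ℝ) ^ (1:ℝ) :=
              Real.rpow_le_rpow_of_exponent_le (by norm_num) (by norm_num)
          _ = 4 := Real.rpow_one 4
      exact mul_le_mul_of_nonneg_right h4 (Real.rpow_nonneg hδ _)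
    have b2 : t ^ ((4:ℝ)/3) ≤ r₀ ^ ((4:ℝ)/3) :=
      Real.rpow_le_rpow ht0 (min_le_right _ _) (by norm_num)
    have b3 : (min D r₀) ^ ((2:ℝ)/3) ≤ r₀ ^ ((2:ℝ)/3) :=
      Real.rpow_le_rpow hM0 (min_le_right _ _) (by norm_num)
    have b4 : (min D r₀) ^ ((1:ℝ)/3) ≤ D ^ ((1:ℝ)/3) :=
      Real.rpow_le_rpow hM0 (min_le_left _ _) (by norm_num)
    have e3 : r₀ ^ ((4:ℝ)/3) * r₀ ^ ((2:ℝ)/3) = r₀ ^ 2 := by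
      rw [← Real.rpow_add hr, ← Real.rpow_natCast r₀ 2]
      norm_num
    calc t ^ 2 * min D r₀
        = (t ^ ((2:ℝ)/3) * t ^ ((4:ℝ)/3)) *
            ((min D r₀) ^ ((2:ℝ)/3) * (min D r₀) ^ ((1:ℝ)/3)) := by rw [← e1, ← e2]
      _ ≤ ((4 * δ) ^ ((2:ℝ)/3) * r₀ ^ ((4:ℝ)/3)) * (r₀ ^ ((2:ℝ)/3) * D ^ ((1:ℝ)/3)) := by
          apply mul_le_mul (mul_le_mul b1 b2 (Real.rpow_nonneg ht0 _) (Real.rpow_nonneg (by linarith) _))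
            (mul_le_mul b3 b4 (Real.rpow_nonneg hM0 _) (Real.rpow_nonneg hr.le _))
            (mul_nonneg (Real.rpow_nonneg hM0 _) (Real.rpow_nonneg hM0 _))
            (mul_nonneg (Real.rpow_nonneg (by linarith) _) (Real.rpow_nonneg hr.le _))
      _ ≤ (4 * δ ^ ((2:ℝ)/3) * r₀ ^ ((4:ℝ)/3)) * (r₀ ^ ((2:ℝ)/3) * D ^ ((1:ℝ)/3)) := by
          apply mul_le_mul_of_nonneg_right (mul_le_mul_of_nonneg_right b1' (Real.rpow_nonneg hr.le _))
            (mul_nonneg (Real.rpow_nonneg hr.le _) (Real.rpow_nonneg hD.le _))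
      _ = 4 * δ ^ ((2:ℝ)/3) * (r₀ ^ ((4:ℝ)/3) * r₀ ^ ((2:ℝ)/3)) * D ^ ((1:ℝ)/3) := by ring
      _ = 4 * δ ^ ((2:ℝ)/3) * r₀ ^ 2 * D ^ ((1:ℝ)/3) := by rw [e3]
  -- expand the right-hand side
  have hπ : Real.sqrt π ^ 2 = π := Real.sq_sqrt pi_pos.le
  have hδ2 : (δ ^ ((1:ℝ)/3)) ^ 2 = δ ^ ((2:ℝ)/3) := by
    rw [← Real.rpow_natCast (δ ^ ((1:ℝ)/3)) 2, ← Real.rpow_mul hδ]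
    norm_num
  have hD2 : (D ^ ((1:ℝ)/6)) ^ 2 = D ^ ((1:ℝ)/3) := by
    rw [← Real.rpow_natCast (D ^ ((1:ℝ)/6)) 2, ← Real.rpow_mul hD.le]
    norm_num
  have hRHS : (1 + r₀ ^ 2) *
      (16 * Real.sqrt π * r₀ ^ 2 * δ ^ ((1:ℝ)/3) * D ^ ((1:ℝ)/6)) ^ 2
      = 256 * π * r₀ ^ 4 * (1 + r₀ ^ 2) * (δ ^ ((2:ℝ)/3) * D ^ ((1:ℝ)/3)) := by
    have expand : (1 + r₀ ^ 2) *
        (16 * Real.sqrt π * r₀ ^ 2 * δ ^ ((1:ℝ)/3) * D ^ ((1:ℝ)/6)) ^ 2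
        = 256 * (Real.sqrt π ^ 2) * r₀ ^ 4 * (1 + r₀ ^ 2) *
            ((δ ^ ((1:ℝ)/3)) ^ 2 * (D ^ ((1:ℝ)/6)) ^ 2) := by ring
    rw [expand, hπ, hδ2, hD2]
  rw [hRHS]
  have hXnn : 0 ≤ δ ^ ((2:ℝ)/3) * D ^ ((1:ℝ)/3) :=
    mul_nonneg (Real.rpow_nonneg hδ _) (Real.rpow_nonneg hD.le _)
  have hfinal : (4 * π * r₀ ^ 4 * t ^ 2 + 16 * π * r₀ ^ 2 * t ^ 2) * min D r₀
      ≤ 256 * π * r₀ ^ 4 * (1 + r₀ ^ 2) * (δ ^ ((2:ℝ)/3) * D ^ ((1:ℝ)/3)) := by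
    have hcoef : (0:ℝ) ≤ 4 * π * r₀ ^ 4 + 16 * π * r₀ ^ 2 := by positivity
    have step : (4 * π * r₀ ^ 4 + 16 * π * r₀ ^ 2) * (t ^ 2 * min D r₀)
        ≤ (4 * π * r₀ ^ 4 + 16 * π * r₀ ^ 2) *
            (4 * δ ^ ((2:ℝ)/3) * r₀ ^ 2 * D ^ ((1:ℝ)/3)) :=
      mul_le_mul_of_nonneg_left hrpow hcoef
    nlinarith [step, mul_nonneg (mul_nonneg pi_pos.le (pow_nonneg hr.le 4)) hXnn,
      mul_nonneg (mul_nonneg (mul_nonneg pi_pos.le (pow_nonneg hr.le 4)) hXnn) (sq_nonneg r₀),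
      mul_nonneg (mul_nonneg pi_pos.le (pow_nonneg hr.le 2)) hXnn]
  calc (∫ σ in (0:ℝ)..D,
        ((h σ) ^ 2 - (euclideanBackwardProfile r₀ σ) ^ 2) ^ 2 *
          (4 * π * (euclideanBackwardProfile r₀ σ) ^ 2))
      + (∫ σ in (0:ℝ)..D,
          (2 * h σ * deriv h σ
              - 2 * euclideanBackwardProfile r₀ σ * euclideanBackwardProfileDeriv r₀ σ) ^ 2 *
            (4 * π * (euclideanBackwardProfile r₀ σ) ^ 2))
      ≤ 4 * π * r₀ ^ 4 * t ^ 2 * min D r₀ + 16 * π * r₀ ^ 2 * t ^ 2 * min D r₀ := by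
        exact add_le_add hI1 hI2
    _ = (4 * π * r₀ ^ 4 * t ^ 2 + 16 * π * r₀ ^ 2 * t ^ 2) * min D r₀ := by ring
    _ ≤ 256 * π * r₀ ^ 4 * (1 + r₀ ^ 2) * (δ ^ ((2:ℝ)/3) * D ^ ((1:ℝ)/3)) := hfinal
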